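/- Suppose the nonholonomic system (M, Ω_M|_C, H_M) with G-symmetry admits k = rank(S) functionally independent G-invariant horizontal gauge momenta J_1, …, J_k with Ad-invariant horizontal gauge symmetries ζ_1, …, ζ_k, and the vertical symmetry condition holds. Let η_1, …, η_k be the corresponding f-valued functions on Q̃ and define J̃_i = i_{(η_i)_{T*Q̃}} Θ_Q̃ on T*Q̃. Then: (i) the functions J̃_1, …, J̃_k are functionally independent and ρ_{G_W}* J̃_i = J_i, where ρ_{G_W} : M → T*Q̃ ≅ M/G_W is the orbit projection; (ii) each J̃_i is conserved by the partially reduced dynamics X̃_nh. -/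
import Mathlib


/-!
STATEMENT 4.  Suppose the nonholonomic system `(M, Ω_M|_C, H_M)` with `G`-symmetry
admits `k = rank S` functionally independent `G`-invariant horizontal gauge
momenta `J_1, …, J_k` with `Ad`-invariant horizontal gauge symmetries
`ζ_1, …, ζ_k`, and the vertical symmetry condition holds.  Let `η_1, …, η_k` be
the corresponding `f`-valued functions on `Q̃` and define
`J̃_i = i_{(η_i)_{T*Q̃}} Θ_Q̃` on `T*Q̃`.  Then:
(i)  the functions `J̃_1, …, J̃_k` are functionally independent and
     `ρ_{G_W}^* J̃_i = J_i`;
(ii) each `J̃_i` is conserved by the partially reduced dynamics `X̃_nh`.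

Abstract model: a point `m ∈ M ⊂ T*Q` over `τ m ∈ Q` has underlying covector
`pM m : E → ℝ` (tangent spaces of `Q` modelled on `E`); a point `α ∈ Mt ≅ T*Q̃`
has base point `baset α ∈ Q̃` and covector `pt α : Et → ℝ`; the evaluation of the
Liouville 1-form on the generator of `η_i` gives `J̃_i α = pt α ((η_i)_{Q̃})`.
Functional independence is expressed as pointwise linear independence of the
differentials, with abstract differential operators `dM`, `dMt`.
-/

theorem statement4
    {Q Qt M Mt G E Et TM TMt 𝔤 𝔣 : Type*} [Group G] [MulAction G Q] [MulAction G M]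
    [AddCommGroup E] [Module ℝ E] [AddCommGroup Et] [Module ℝ Et]
    [AddCommGroup TM] [Module ℝ TM] [AddCommGroup TMt] [Module ℝ TMt]
    [AddCommGroup 𝔤] [Module ℝ 𝔤] [AddCommGroup 𝔣] [Module ℝ 𝔣]
    {k : ℕ}
    -- bundle projections and orbit projections
    (τ : M → Q) (π : Q → Qt)
    (ρ : M → Mt) (hρ : Function.Surjective ρ)          -- ρ_{G_W} : M → T*Q̃
    (baset : Mt → Qt) (pt : Mt → Et →ₗ[ℝ] ℝ)           -- point of T*Q̃ = base + covector
    (hbase : ∀ m, baset (ρ m) = π (τ m))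
    (pM : M → E →ₗ[ℝ] ℝ)                                -- covector underlying m ∈ M ⊂ T*Q
    -- infinitesimal generators on Q and Q̃
    (σ : Q → 𝔤 →ₗ[ℝ] E) (σt : Qt → 𝔣 →ₗ[ℝ] Et)
    -- tangent map of the orbit projection π : Q → Q̃
    (Tρ : Q → E →ₗ[ℝ] Et)
    -- the constraint distribution D, (ζ_i)_Q ∈ S ⊂ D
    (D : Q → Submodule ℝ E)
    -- the reduced covector satisfies ⟨ρ(m), Tρ v⟩ = ⟨m, v⟩ on constrained directions
    (hred : ∀ m : M, ∀ v ∈ D (τ m), pt (ρ m) (Tρ (τ m) v) = pM m v)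
    -- the horizontal gauge symmetries ζ_i and the induced 𝔣-valued functions η_i on Q̃
    (ζ : Fin k → Q → 𝔤) (hζD : ∀ (i : Fin k) (q : Q), σ q (ζ i q) ∈ D q)
    (ηt : Fin k → Qt → 𝔣)
    (hη : ∀ (i : Fin k) (q : Q), Tρ q (σ q (ζ i q)) = σt (π q) (ηt i (π q)))
    -- the G-invariant horizontal gauge momenta J_i = ⟨J^nh, ζ_i⟩ on M
    (J : Fin k → M → ℝ)
    (hJ : ∀ (i : Fin k) (m : M), J i m = pM m (σ (τ m) (ζ i (τ m))))
    (hJinv : ∀ (i : Fin k) (g : G) (m : M), J i (g • m) = J i m)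
    -- abstract differentials on M and on T*Q̃ and the chain rule along ρ
    (dM : (M → ℝ) → M → TM →ₗ[ℝ] ℝ)
    (dMt : (Mt → ℝ) → Mt → TMt →ₗ[ℝ] ℝ)
    (TρM : M → TM →ₗ[ℝ] TMt) (hTρM : ∀ m, Function.Surjective (TρM m))
    (hchain : ∀ (f : Mt → ℝ) (m : M),
      dM (fun m' => f (ρ m')) m = (dMt f (ρ m)).comp (TρM m))
    -- the nonholonomic vector field and the partially reduced dynamics X̃_nh = Tρ(X_nh)
    (Xnh : (m : M) → TM) (Xnht : (α : Mt) → TMt)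
    (hXnht : ∀ m, Xnht (ρ m) = TρM m (Xnh m))
    -- the J_i are functionally independent horizontal gauge momenta (conserved by X_nh)
    (hJind : ∀ m : M, LinearIndependent ℝ (fun i : Fin k => dM (J i) m))
    (hJcons : ∀ (i : Fin k) (m : M), dM (J i) m (Xnh m) = 0)
    -- the partially reduced horizontal gauge momenta J̃_i = i_{(η_i)_{T*Q̃}} Θ_Q̃
    (Jt : Fin k → Mt → ℝ)
    (hJt : ∀ (i : Fin k) (α : Mt), Jt i α = pt α (σt (baset α) (ηt i (baset α)))) :
    -- (i) ρ_{G_W}^* J̃_i = J_i and the J̃_i are functionally independent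
    (∀ (i : Fin k) (m : M), Jt i (ρ m) = J i m) ∧
    (∀ α : Mt, LinearIndependent ℝ (fun i : Fin k => dMt (Jt i) α)) ∧
    -- (ii) the J̃_i are conserved by the partially reduced dynamics X̃_nh
    (∀ (i : Fin k) (α : Mt), dMt (Jt i) α (Xnht α) = 0) := by
  have hpull : ∀ (i : Fin k) (m : M), Jt i (ρ m) = J i m := by
    intro i m
    rw [hJt, hbase, ← hη, hred _ _ (hζD i (τ m)), hJ]
  refine ⟨hpull, ?_, ?_⟩
  · intro α
    obtain ⟨m, rfl⟩ := hρ α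
    have hd : ∀ i : Fin k, dM (J i) m = (dMt (Jt i) (ρ m)).comp (TρM m) := by
      intro i
      have : (fun m' => Jt i (ρ m')) = J i := funext fun m' => hpull i m'
      rw [← this, hchain]
    rw [Fintype.linearIndependent_iff]
    intro c hc
    have h2 : ∑ i, c i • dM (J i) m = 0 := by
      simp only [hd]
      ext v
      have := congrFun (congrArg DFunLike.coe hc) (TρM m v)
      simpa using this
    exact (Fintype.linearIndependent_iff.mp (hJind m)) c h2
  · intro i α
    obtain ⟨m, rfl⟩ := hρ α
    have hd : dM (J i) m = (dMt (Jt i) (ρ m)).comp (TρM m) := by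
      have : (fun m' => Jt i (ρ m')) = J i := funext fun m' => hpull i m'
      rw [← this, hchain]
    rw [hXnht]
    have := hJcons i m
    rw [hd] at this
    simpa using this
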